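/- Let k ∈ ℕ with k ≥ 1 and ν ∈ ℕ with 0 ≤ ν ≤ k, and set a = (π/k)(ν − 1/6). Let b ≥ 0 and define f(x) = 4·cos(a)·cosh(bx)/(cos(2a) + cosh(2bx)). Then |f| is monotonically decreasing on [0,1]. -/

import Mathlib

open Real

set_option maxHeartbeats 1000000 in
theorem abs_f_antitoneOn (k : ℕ) (hk : 1 ≤ k) (ν : ℕ) (hν : ν ≤ k) (b : ℝ) (hb : 0 ≤ b) :
    AntitoneOn (fun x : ℝ =>
        |4 * Real.cos (Real.pi / k * (ν - 1 / 6)) * Real.cosh (b * x) /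
          (Real.cos (2 * (Real.pi / k * (ν - 1 / 6))) + Real.cosh (2 * b * x))|)
      (Set.Icc (0 : ℝ) 1) := by
  set a : ℝ := Real.pi / k * (ν - 1 / 6) with ha
  have hk0 : (0:ℝ) < k := by exact_mod_cast hk
  have hcosa : Real.cos a ≠ 0 := by
    intro h
    rcases Real.cos_eq_zero_iff.1 h with ⟨n, hn⟩
    rw [ha] at hn
    have hπ := Real.pi_ne_zero
    have key : (12 * (ν:ℝ) - 2) * Real.pi = (6 * (k:ℝ) * (2 * n + 1)) * Real.pi := by
      field_simp at hn
      linear_combination Real.pi * hn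
    have : (12 * (ν:ℝ) - 2) = 6 * ((k:ℝ) * (2 * n + 1)) := by
      have := mul_right_cancel₀ hπ key; linarith
    have h2 : (12 * (ν:ℤ) - 2) = 6 * ((k:ℤ) * (2 * n + 1)) := by exact_mod_cast this
    omega
  have hc1 : Real.cos a ^ 2 ≤ 1 := by
    nlinarith [Real.neg_one_le_cos a, Real.cos_le_one a]
  have hc0 : 0 < Real.cos a ^ 2 := by positivity
  intro x hx y hy hxy
  simp only
  have hbx : 0 ≤ b * x := mul_nonneg hb hx.1
  have hby : 0 ≤ b * y := mul_nonneg hb hy.1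
  have huv : Real.cosh (b * x) ≤ Real.cosh (b * y) := by
    rw [Real.cosh_le_cosh, abs_of_nonneg hbx, abs_of_nonneg hby]
    exact mul_le_mul_of_nonneg_left hxy hb
  set u := Real.cosh (b * x) with hu
  set v := Real.cosh (b * y) with hv
  have hu1 : 1 ≤ u := Real.one_le_cosh _
  have hv1 : 1 ≤ v := Real.one_le_cosh _
  have hex : Real.cosh (2 * b * x) = 2 * u ^ 2 - 1 := by
    rw [hu, mul_assoc, Real.cosh_two_mul, Real.sinh_sq]; ring
  have hey : Real.cosh (2 * b * y) = 2 * v ^ 2 - 1 := by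
    rw [hv, mul_assoc, Real.cosh_two_mul, Real.sinh_sq]; ring
  have hca : Real.cos (2 * a) = 2 * Real.cos a ^ 2 - 1 := Real.cos_two_mul a
  rw [hex, hey, hca]
  have hDx : 0 < 2 * Real.cos a ^ 2 - 1 + (2 * u ^ 2 - 1) := by nlinarith
  have hDy : 0 < 2 * Real.cos a ^ 2 - 1 + (2 * v ^ 2 - 1) := by nlinarith
  rw [abs_div, abs_div, abs_of_pos hDx, abs_of_pos hDy]
  rw [div_le_div_iff₀ hDy hDx]
  have hu0 : 0 < u := lt_of_lt_of_le one_pos hu1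
  have hv0 : 0 < v := lt_of_lt_of_le one_pos hv1
  have hNx : |4 * Real.cos a * u| = 4 * |Real.cos a| * u := by
    rw [abs_mul, abs_mul, abs_of_pos hu0]
    norm_num
  have hNy : |4 * Real.cos a * v| = 4 * |Real.cos a| * v := by
    rw [abs_mul, abs_mul, abs_of_pos hv0]
    norm_num
  rw [hNx, hNy]
  have hC : 0 ≤ |Real.cos a| := abs_nonneg _
  have hsq : |Real.cos a| ^ 2 = Real.cos a ^ 2 := sq_abs _
  nlinarith [mul_nonneg (mul_nonneg hC (sub_nonneg.2 huv))
    (by nlinarith : (0:ℝ) ≤ u * v + 1 - Real.cos a ^ 2)]
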